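/- arXiv:2601.09206 — 2 statements merged into one kernel-verified Lean document; each statement's English description precedes it below -/
import Mathlib

section
/- Let K, M be invertible N×N complex matrices, r, s ∈ ℂ^{N×2}, with KM − MK = r·sᵀ and I + M invertible. Then det(I − sᵀ(I+M)⁻¹K⁻¹r) = 1. -/
open Matrix

/-- `det(I - sᵀ(I+M)⁻¹K⁻¹r) = 1` under the Sylvester equation `KM - MK = r sᵀ`. -/
theorem det_v_eq_one {N : ℕ} (K M : Matrix (Fin N) (Fin N) ℂ)
    (r s : Matrix (Fin N) (Fin 2) ℂ)
    (hK : IsUnit K.det) (hM : IsUnit M.det) (hIM : IsUnit (1 + M).det)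
    (hS : K * M - M * K = r * sᵀ) :
    ((1 : Matrix (Fin 2) (Fin 2) ℂ) - sᵀ * (1 + M)⁻¹ * K⁻¹ * r).det = 1 := by
  have h1 : (1 : Matrix (Fin 2) (Fin 2) ℂ) - sᵀ * (1 + M)⁻¹ * K⁻¹ * r
      = 1 + (-sᵀ) * ((1 + M)⁻¹ * K⁻¹ * r) := by
    simp [Matrix.neg_mul, sub_eq_add_neg, Matrix.mul_assoc]
  rw [h1, Matrix.det_one_add_mul_comm]
  have h2 : (1 : Matrix (Fin N) (Fin N) ℂ) + (1 + M)⁻¹ * K⁻¹ * r * (-sᵀ)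
      = (1 + M)⁻¹ * K⁻¹ * ((1 + M) * K) := by
    have hKi : K * K⁻¹ = 1 := mul_nonsing_inv K hK
    have hIMi : (1 + M)⁻¹ * (1 + M) = 1 := nonsing_inv_mul _ hIM
    have hrs : r * sᵀ = K * M - M * K := hS.symm
    have : (1 + M)⁻¹ * K⁻¹ * ((1 + M) * K)
        = (1 + M)⁻¹ * K⁻¹ * (K + K * M - (r * sᵀ)) := by
      rw [hrs]; noncomm_ring
    rw [this]
    have hKiK : K⁻¹ * K = 1 := nonsing_inv_mul K hK
    have : (1 + M)⁻¹ * K⁻¹ * (K + K * M - r * sᵀ)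
        = (1 + M)⁻¹ * (K⁻¹ * K) * (1 + M) - (1 + M)⁻¹ * K⁻¹ * (r * sᵀ) := by
      noncomm_ring
    rw [this, hKiK, mul_one, hIMi]
    simp [hrs, Matrix.mul_neg, Matrix.mul_assoc, sub_eq_add_neg]
  rw [h2]
  rw [Matrix.det_mul, Matrix.det_mul, Matrix.det_mul,
    Matrix.det_nonsing_inv, Matrix.det_nonsing_inv, Ring.inverse_eq_inv']
  field_simp [hK.ne_zero, hIM.ne_zero]
end

section
/- Let K, L, M be invertible N×N complex matrices with KM − ML = r·sᵀ for r, s ∈ ℂ^{N×2}. Then det(I − sᵀM⁻¹K⁻¹r) = det(L)/det(K). -/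
open Matrix

/-- In the KP-type scheme, `det(I - sᵀ M⁻¹ K⁻¹ r) = det L / det K`. -/
theorem det_v_eq_detL_div_detK {N : ℕ} (K L M : Matrix (Fin N) (Fin N) ℂ)
    (r s : Matrix (Fin N) (Fin 2) ℂ)
    (hK : IsUnit K.det) (hL : IsUnit L.det) (hM : IsUnit M.det)
    (hS : K * M - M * L = r * sᵀ) :
    ((1 : Matrix (Fin 2) (Fin 2) ℂ) - sᵀ * M⁻¹ * K⁻¹ * r).det = L.det / K.det := by
  have hK1 : K⁻¹ * K = 1 := nonsing_inv_mul K hK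
  have hM1 : M⁻¹ * M = 1 := nonsing_inv_mul M hM
  have h1 : (1 : Matrix (Fin 2) (Fin 2) ℂ) - sᵀ * M⁻¹ * K⁻¹ * r
      = 1 + sᵀ * (-(M⁻¹ * K⁻¹ * r)) := by
    simp [mul_neg, sub_eq_add_neg, Matrix.mul_assoc]
  rw [h1, det_one_add_mul_comm]
  have h2 : (1 : Matrix (Fin N) (Fin N) ℂ) + -(M⁻¹ * K⁻¹ * r) * sᵀ
      = M⁻¹ * K⁻¹ * M * L := by
    have : -(M⁻¹ * K⁻¹ * r) * sᵀ = -(M⁻¹ * (K⁻¹ * (r * sᵀ))) := by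
      simp [neg_mul, Matrix.mul_assoc]
    rw [this, ← hS, mul_sub, ← Matrix.mul_assoc, hK1, one_mul, mul_sub, hM1]
    rw [show M⁻¹ * (K⁻¹ * (M * L)) = M⁻¹ * K⁻¹ * M * L by simp [Matrix.mul_assoc]]
    abel
  rw [h2, det_mul, det_mul, det_mul, det_nonsing_inv, det_nonsing_inv]
  have hK0 : K.det ≠ 0 := hK.ne_zero
  have hM0 : M.det ≠ 0 := hM.ne_zero
  simp only [Ring.inverse_eq_inv']
  field_simp
end
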